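/- arXiv:1402.3705 — 4 statements merged into one kernel-verified Lean document; each statement's English description precedes it below -/
import Mathlib

section
/- For every finite abelian group H and integer n ≥ 1, there exists a finite abelian group F such that F/F₍ₙ₎ is isomorphic to H and F is over n, and F is unique up to isomorphism. -/
/-- A finite abelian group `F` is *over `n`* if every nontrivial direct summand
`F₁` of `F` (i.e. `F₁` admitting a complement `F₂` with `F = F₁ ⊕ F₂`)
satisfies `n • F₁ ≠ 0`. -/
def IsOver (F : Type*) [AddCommGroup F] (n : ℕ) : Prop :=
  ∀ F₁ F₂ : AddSubgroup F, IsCompl F₁ F₂ → F₁ ≠ ⊥ → ∃ x ∈ F₁, n • x ≠ (0 : F)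

/-- `F₍ₙ₎ = {x ∈ F : n • x = 0}`, the `n`-torsion subgroup of `F`. -/
def nTors (F : Type*) [AddCommGroup F] (n : ℕ) : AddSubgroup F where
  carrier := {x | n • x = 0}
  zero_mem' := by simp
  add_mem' := by
    intro a b ha hb
    simp only [Set.mem_setOf_eq, smul_add] at *
    rw [ha, hb, add_zero]
  neg_mem' := by
    intro a ha
    simp only [Set.mem_setOf_eq, smul_neg] at *
    rw [ha, neg_zero]


theorem mem_nTors {F : Type*} [AddCommGroup F] {n : ℕ} {x : F} :
    x ∈ nTors F n ↔ n • x = 0 := Iff.rfl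



theorem nat_dvd_mul_iff {q n : ℕ} (hq : q ≠ 0) (v : ℕ) :
    q ∣ n * v ↔ (q / Nat.gcd q n) ∣ v := by
  set g := Nat.gcd q n with hg
  have hg0 : 0 < g := Nat.gcd_pos_of_pos_left n (Nat.pos_of_ne_zero hq)
  have hgq : g ∣ q := Nat.gcd_dvd_left q n
  have hgn : g ∣ n := Nat.gcd_dvd_right q n
  constructor
  · rintro ⟨k, hk⟩
    have hco : (q / g).Coprime (n / g) := Nat.coprime_div_gcd_div_gcd hg0
    refine hco.dvd_of_dvd_mul_left ⟨k, ?_⟩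
    have : g * (n / g * v) = g * (q / g * k) := by
      rw [← Nat.mul_assoc, Nat.mul_div_cancel' hgn, ← Nat.mul_assoc,
        Nat.mul_div_cancel' hgq, hk]
    exact Nat.eq_of_mul_eq_mul_left hg0 this
  · rintro ⟨k, hk⟩
    obtain ⟨m, hm⟩ := hgn
    have hng : n / g = m := by rw [hm, Nat.mul_div_cancel_left _ hg0]
    refine ⟨(n / g) * k, ?_⟩
    rw [hk, hng]
    calc n * (q / g * k) = (q / g * g) * (m * k) := by rw [hm]; ring
    _ = q * (m * k) := by rw [Nat.div_mul_cancel hgq]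

theorem zmod_nsmul_eq_zero_iff {q : ℕ} (hq : q ≠ 0) (n : ℕ) (x : ZMod q) :
    n • x = 0 ↔ (q / Nat.gcd q n) ∣ x.val := by
  haveI : NeZero q := ⟨hq⟩
  have hx : x = ((x.val : ℕ) : ZMod q) := (ZMod.natCast_rightInverse x).symm
  have key : n • x = ((n * x.val : ℕ) : ZMod q) := by
    conv_lhs => rw [hx]
    rw [nsmul_eq_mul, ← Nat.cast_mul]
  rw [key, ZMod.natCast_eq_zero_iff, nat_dvd_mul_iff hq]

theorem card_zmod_tors {q : ℕ} (hq : q ≠ 0) (n : ℕ) :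
    Nat.card {x : ZMod q // n • x = 0} = Nat.gcd q n := by
  haveI : NeZero q := ⟨hq⟩
  set g := Nat.gcd q n with hgdef
  have hg0 : 0 < g := Nat.gcd_pos_of_pos_left n (Nat.pos_of_ne_zero hq)
  set d := q / g with hddef
  have hdg : d * g = q := Nat.div_mul_cancel (Nat.gcd_dvd_left q n)
  have hd0 : 0 < d := by
    rcases Nat.eq_zero_or_pos d with h | h
    · exfalso; apply hq; rw [← hdg, h, Nat.zero_mul]
    · exact h
  have e1 : {x : ZMod q // n • x = 0} ≃ {x : ZMod q // d ∣ x.val} :=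
    Equiv.subtypeEquivRight (fun x => zmod_nsmul_eq_zero_iff hq n x)
  have e2 : {x : ZMod q // d ∣ x.val} ≃ Fin g := by
    refine ⟨fun x => ⟨x.1.val / d, ?_⟩, fun k => ⟨((d * k.1 : ℕ) : ZMod q), ?_⟩, ?_, ?_⟩
    · rw [Nat.div_lt_iff_lt_mul hd0]
      calc x.1.val < q := ZMod.val_lt x.1
      _ = g * d := by rw [Nat.mul_comm]; exact hdg.symm
    · rw [ZMod.val_natCast_of_lt]
      · exact ⟨k.1, rfl⟩
      · calc d * k.1 < d * g := (Nat.mul_lt_mul_left hd0).2 k.2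
        _ = q := hdg
    · rintro ⟨x, hx⟩
      ext
      simp only
      rw [Nat.mul_div_cancel' hx]
      exact ZMod.natCast_rightInverse x
    · rintro ⟨k, hk⟩
      ext
      simp only
      rw [ZMod.val_natCast_of_lt, Nat.mul_div_cancel_left _ hd0]
      calc d * k < d * g := (Nat.mul_lt_mul_left hd0).2 hk
      _ = q := hdg
  rw [Nat.card_congr (e1.trans e2), Nat.card_eq_fintype_card, Fintype.card_fin]

theorem card_pi_tors {ι : Type} [Fintype ι] (q : ι → ℕ) (hq : ∀ i, q i ≠ 0) (n : ℕ) :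
    Nat.card {x : ∀ i, ZMod (q i) // n • x = 0} = ∏ i, Nat.gcd (q i) n := by
  have e1 : {x : ∀ i, ZMod (q i) // n • x = 0} ≃ {x : ∀ i, ZMod (q i) // ∀ i, n • x i = 0} :=
    Equiv.subtypeEquivRight (fun x => by
      constructor
      · intro h i; rw [← Pi.smul_apply, h]; rfl
      · intro h; funext i; exact h i)
  have e2 : {x : ∀ i, ZMod (q i) // ∀ i, n • x i = 0} ≃ ∀ i, {y : ZMod (q i) // n • y = 0} :=
    Equiv.subtypePiEquivPi (p := fun i y => n • y = 0)
  rw [Nat.card_congr (e1.trans e2), Nat.card_pi]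
  exact Finset.prod_congr rfl (fun i _ => card_zmod_tors (hq i) n)

theorem card_tors_congr {F G : Type*} [AddCommGroup F] [AddCommGroup G] (e : F ≃+ G) (m : ℕ) :
    Nat.card {x : F // m • x = 0} = Nat.card {x : G // m • x = 0} := by
  refine Nat.card_congr (e.toEquiv.subtypeEquiv fun x => ?_)
  constructor
  · intro h
    have : e (m • x) = e 0 := by rw [h]
    simpa using this
  · intro h
    apply e.injective
    simpa using h

def piSubtypeEquiv {ι : Type} (β : ι → Type*) [∀ i, AddCommGroup (β i)]
    (P : ι → Prop) [DecidablePred P] (htriv : ∀ i, ¬ P i → Subsingleton (β i)) :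
    (∀ i, β i) ≃+ (∀ j : {i // P i}, β j.1) where
  toFun x j := x j.1
  invFun y i := if h : P i then y ⟨i, h⟩ else 0
  left_inv x := by
    funext i
    dsimp only
    split_ifs with h
    · rfl
    · haveI := htriv i h
      exact Subsingleton.elim _ _
  right_inv y := by
    funext j
    dsimp only
    rw [dif_pos j.2]
  map_add' x y := rfl

theorem decompPi (G : Type) [AddCommGroup G] [Finite G] :
    ∃ (ι : Type) (_ : Fintype ι) (p a : ι → ℕ), (∀ i, (p i).Prime) ∧ (∀ i, 1 ≤ a i) ∧
      Nonempty (G ≃+ ∀ i, ZMod (p i ^ a i)) := by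
  obtain ⟨ι, hι, p, hp, e, ⟨f⟩⟩ := AddCommGroup.equiv_directSum_zmod_of_finite G
  classical
  refine ⟨{i // e i ≠ 0}, inferInstance, fun j => p j.1, fun j => e j.1, fun j => hp j.1,
    fun j => Nat.one_le_iff_ne_zero.2 j.2, ⟨?_⟩⟩
  refine (f.trans (DirectSum.addEquivProd _)).trans
    (piSubtypeEquiv (fun i => ZMod (p i ^ e i)) (fun i => e i ≠ 0) ?_)
  intro i h
  rw [not_ne_iff] at h
  show Subsingleton (ZMod (p i ^ e i))
  rw [h, pow_zero]
  infer_instance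

theorem isOver_congr {F G : Type*} [AddCommGroup F] [AddCommGroup G] (e : F ≃+ G) (n : ℕ)
    (h : IsOver F n) : IsOver G n := by
  intro G₁ G₂ hc hne
  set F₁ := G₁.comap e.toAddMonoidHom with hF₁
  set F₂ := G₂.comap e.toAddMonoidHom with hF₂
  have hmem₁ : ∀ x : F, x ∈ F₁ ↔ e x ∈ G₁ := fun x => Iff.rfl
  have hmem₂ : ∀ x : F, x ∈ F₂ ↔ e x ∈ G₂ := fun x => Iff.rfl
  have hcompl : IsCompl F₁ F₂ := by
    constructor
    · rw [disjoint_iff, AddSubgroup.eq_bot_iff_forall]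
      intro x hx
      rw [AddSubgroup.mem_inf] at hx
      have : e x ∈ G₁ ⊓ G₂ := AddSubgroup.mem_inf.2 ⟨hx.1, hx.2⟩
      rw [disjoint_iff.1 hc.disjoint, AddSubgroup.mem_bot] at this
      apply e.injective
      rw [this, map_zero]
    · rw [codisjoint_iff, AddSubgroup.eq_top_iff']
      intro x
      have : e x ∈ G₁ ⊔ G₂ := by
        rw [codisjoint_iff.1 hc.codisjoint]; trivial
      rw [AddSubgroup.mem_sup] at this
      obtain ⟨y, hy, z, hz, hyz⟩ := this
      rw [AddSubgroup.mem_sup]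
      refine ⟨e.symm y, ?_, e.symm z, ?_, ?_⟩
      · rw [hmem₁, e.apply_symm_apply]; exact hy
      · rw [hmem₂, e.apply_symm_apply]; exact hz
      · apply e.injective
        rw [map_add, e.apply_symm_apply, e.apply_symm_apply, hyz]
  have hFne : F₁ ≠ ⊥ := by
    intro hbot
    apply hne
    rw [AddSubgroup.eq_bot_iff_forall]
    intro y hy
    have : e.symm y ∈ F₁ := by rw [hmem₁, e.apply_symm_apply]; exact hy
    rw [hbot, AddSubgroup.mem_bot] at this
    have := congrArg e this
    rwa [e.apply_symm_apply, map_zero] at this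
  obtain ⟨x, hx, hnx⟩ := h F₁ F₂ hcompl hFne
  refine ⟨e x, (hmem₁ x).1 hx, ?_⟩
  intro h0
  apply hnx
  apply e.injective
  rw [map_nsmul, h0, map_zero]

theorem isOver_of_div {F : Type*} [AddCommGroup F] (n : ℕ) (hn : 1 ≤ n)
    (HP : ∀ p : ℕ, p.Prime → p ∣ n → ∀ x : F, p • x = 0 →
      ∃ y : F, p ^ (n.factorization p) • y = x) :
    IsOver F n := by
  intro F₁ F₂ hc hne
  by_contra hcon
  push_neg at hcon
  obtain ⟨x, hxF, hx0⟩ : ∃ x ∈ F₁, x ≠ 0 := by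
    by_contra hall
    push_neg at hall
    exact hne (AddSubgroup.eq_bot_iff_forall F₁ |>.2 hall)
  have hnz : n ≠ 0 := Nat.one_le_iff_ne_zero.1 hn
  set o := addOrderOf x with ho
  have hox : o • x = 0 := addOrderOf_nsmul_eq_zero x
  have hodvd : o ∣ n := addOrderOf_dvd_iff_nsmul_eq_zero.2 (hcon x hxF)
  have ho0 : o ≠ 0 := by
    intro h
    rw [h] at hodvd
    exact hnz (Nat.eq_zero_of_zero_dvd hodvd)
  have ho1 : o ≠ 1 := by
    intro h
    exact hx0 (AddMonoid.addOrderOf_eq_one_iff.1 h)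
  set p := o.minFac with hpdef
  have hp : p.Prime := Nat.minFac_prime ho1
  have hpo : p ∣ o := Nat.minFac_dvd o
  have hpn : p ∣ n := hpo.trans hodvd
  set x' := (o / p) • x with hx'
  have hx'F : x' ∈ F₁ := AddSubgroup.nsmul_mem F₁ hxF _
  have hpx' : p • x' = 0 := by
    rw [hx', ← mul_smul, Nat.mul_div_cancel' hpo, hox]
  have hx'0 : x' ≠ 0 := by
    intro h
    have hdvd : o ∣ o / p := addOrderOf_dvd_iff_nsmul_eq_zero.2 h
    have hlt : o / p < o := Nat.div_lt_self (Nat.pos_of_ne_zero ho0) hp.one_lt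
    have hpos : 0 < o / p := Nat.div_pos (Nat.minFac_le (Nat.pos_of_ne_zero ho0)) hp.pos
    exact Nat.not_lt.2 (Nat.le_of_dvd hpos hdvd) hlt
  have hordx' : addOrderOf x' = p := by
    have h1 : addOrderOf x' ∣ p := addOrderOf_dvd_iff_nsmul_eq_zero.2 hpx'
    rcases (Nat.dvd_prime hp).1 h1 with h | h
    · exact absurd (AddMonoid.addOrderOf_eq_one_iff.1 h) hx'0
    · exact h
  obtain ⟨y, hy⟩ := HP p hp hpn x' hpx'
  set v := n.factorization p with hv
  obtain ⟨y₁, hy₁, y₂, hy₂, hsum⟩ : ∃ y₁ ∈ F₁, ∃ y₂ ∈ F₂, y₁ + y₂ = y := by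
    have : y ∈ F₁ ⊔ F₂ := by rw [codisjoint_iff.1 hc.codisjoint]; trivial
    exact AddSubgroup.mem_sup.1 this
  have key : x' = p ^ v • y₁ := by
    have h2 : p ^ v • y₂ ∈ F₂ := AddSubgroup.nsmul_mem F₂ hy₂ _
    have h3 : p ^ v • y₂ = x' - p ^ v • y₁ := by
      rw [← hy, ← hsum, smul_add]
      abel
    have h4 : p ^ v • y₂ ∈ F₁ := by
      rw [h3]
      exact AddSubgroup.sub_mem F₁ hx'F (AddSubgroup.nsmul_mem F₁ hy₁ _)
    have h5 : p ^ v • y₂ = 0 := by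
      have : p ^ v • y₂ ∈ F₁ ⊓ F₂ := AddSubgroup.mem_inf.2 ⟨h4, h2⟩
      rwa [disjoint_iff.1 hc.disjoint, AddSubgroup.mem_bot] at this
    rw [h5] at h3
    exact sub_eq_zero.1 h3.symm
  set m := n / p ^ v with hm
  have hmx' : m • x' = 0 := by
    rw [key, ← mul_smul, mul_comm, Nat.ordProj_mul_ordCompl_eq_self n p]
    exact hcon y₁ hy₁
  have hpm : p ∣ m := by
    rw [← hordx']
    exact addOrderOf_dvd_iff_nsmul_eq_zero.2 hmx'
  exact Nat.not_dvd_ordCompl hp hnz hpm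

theorem div_pi {ι : Type} [Fintype ι] (n : ℕ) (hn : 1 ≤ n) (p a : ι → ℕ)
    (hp : ∀ i, (p i).Prime) (h : ∀ i, ¬ p i ^ a i ∣ n) (d : ℕ) (hd : d.Prime) (hdn : d ∣ n)
    (x : ∀ i, ZMod (p i ^ a i)) (hx : d • x = 0) :
    ∃ y : ∀ i, ZMod (p i ^ a i), d ^ (n.factorization d) • y = x := by
  classical
  have hnz : n ≠ 0 := Nat.one_le_iff_ne_zero.1 hn
  set v := n.factorization d with hv
  have hq0 : ∀ i, p i ^ a i ≠ 0 := fun i => pow_ne_zero _ (hp i).pos.ne'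
  have hxi : ∀ i, d • x i = 0 := by
    intro i
    rw [← Pi.smul_apply, hx]; rfl
  refine ⟨fun i => if hpd : p i = d then
      ((d ^ (a i - 1 - v) * ((x i).val / d ^ (a i - 1)) : ℕ) : ZMod (p i ^ a i)) else 0, ?_⟩
  funext i
  rw [Pi.smul_apply]
  by_cases hpd : p i = d
  · rw [dif_pos hpd]
    have ha1 : 1 ≤ a i := by
      rcases Nat.eq_zero_or_pos (a i) with h0 | h0
      · exact absurd (by rw [h0, pow_zero]; exact one_dvd n) (h i)
      · exact h0
    have hva : v + 1 ≤ a i := by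
      by_contra hlt
      push_neg at hlt
      have hle : a i ≤ v := Nat.lt_succ_iff.1 hlt
      exact h i (dvd_trans (pow_dvd_pow _ (hpd ▸ hle)) (hpd ▸ Nat.ordProj_dvd n d))
    subst hpd
    set e := a i with he
    haveI : NeZero (p i ^ e) := ⟨hq0 i⟩
    have hgcd : Nat.gcd (p i ^ e) (p i) = p i :=
      Nat.gcd_eq_right (dvd_pow_self (p i) (Nat.one_le_iff_ne_zero.1 ha1))
    have hquot : p i ^ e / Nat.gcd (p i ^ e) (p i) = p i ^ (e - 1) := by
      rw [hgcd, ← Nat.pow_div ha1 (hp i).pos, pow_one]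
    have hdvdval : p i ^ (e - 1) ∣ (x i).val := by
      have := (zmod_nsmul_eq_zero_iff (hq0 i) (p i) (x i)).1 (hxi i)
      rwa [hquot] at this
    have hcast : (((x i).val : ℕ) : ZMod (p i ^ e)) = x i := ZMod.natCast_rightInverse (x i)
    have harith : v + (e - 1 - v) = e - 1 := by omega
    have hnat : p i ^ v * (p i ^ (e - 1 - v) * ((x i).val / p i ^ (e - 1))) = (x i).val := by
      rw [← Nat.mul_assoc, ← pow_add, harith, Nat.mul_div_cancel' hdvdval]
    rw [nsmul_eq_mul, ← Nat.cast_mul, hnat, hcast]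
  · rw [dif_neg hpd, smul_zero]
    have hco' : Nat.Coprime (p i) d := (Nat.coprime_primes (hp i) hd).2 hpd
    have hco : Nat.Coprime (p i ^ a i) d := by
      have := Nat.Coprime.pow (a i) 1 hco'
      rwa [pow_one] at this
    haveI : NeZero (p i ^ a i) := ⟨hq0 i⟩
    have hx0 : x i = 0 := by
      have hval := (zmod_nsmul_eq_zero_iff (hq0 i) d (x i)).1 (hxi i)
      rw [hco.gcd_eq_one, Nat.div_one] at hval
      rw [← ZMod.val_eq_zero]
      exact Nat.eq_zero_of_dvd_of_lt hval (ZMod.val_lt (x i))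
    rw [hx0]

theorem map_nTors {F G : Type*} [AddCommGroup F] [AddCommGroup G] (e : F ≃+ G) (n : ℕ) :
    AddSubgroup.map e.toAddMonoidHom (nTors F n) = nTors G n := by
  ext y
  rw [AddSubgroup.mem_map]
  constructor
  · rintro ⟨x, hx, rfl⟩
    rw [mem_nTors] at hx ⊢
    rw [← map_nsmul]
    simp [hx]
  · intro hy
    refine ⟨e.symm y, ?_, e.apply_symm_apply y⟩
    rw [mem_nTors] at hy ⊢
    apply e.injective
    rw [map_nsmul, e.apply_symm_apply, hy, map_zero]

def quotNTorsCongr {F G : Type*} [AddCommGroup F] [AddCommGroup G] (e : F ≃+ G) (n : ℕ) :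
    (F ⧸ nTors F n) ≃+ (G ⧸ nTors G n) :=
  QuotientAddGroup.congr (nTors F n) (nTors G n) e (map_nTors e n)

theorem quot_pi_equiv {ι : Type} [Fintype ι] (q : ι → ℕ) (hq : ∀ i, q i ≠ 0) (n : ℕ) :
    Nonempty (((∀ i, ZMod (q i)) ⧸ nTors (∀ i, ZMod (q i)) n) ≃+
      ∀ i, ZMod (q i / Nat.gcd (q i) n)) := by
  set d := fun i => q i / Nat.gcd (q i) n with hd
  have hdvd : ∀ i, d i ∣ q i := fun i => Nat.div_dvd_of_dvd (Nat.gcd_dvd_left _ _)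
  have hd0 : ∀ i, d i ≠ 0 := by
    intro i h
    apply hq i
    have h2 := Nat.div_mul_cancel (Nat.gcd_dvd_left (q i) n)
    rw [← h2]
    show d i * (q i).gcd n = 0
    rw [h, Nat.zero_mul]
  haveI : ∀ i, NeZero (d i) := fun i => ⟨hd0 i⟩
  haveI : ∀ i, NeZero (q i) := fun i => ⟨hq i⟩
  set φ : (∀ i, ZMod (q i)) →+ (∀ i, ZMod (d i)) :=
    AddMonoidHom.mk' (fun x i => ZMod.castHom (hdvd i) (ZMod (d i)) (x i))
      (by intro x y; funext i; exact map_add (ZMod.castHom (hdvd i) (ZMod (d i))) (x i) (y i)) with hφ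
  have hsurj : Function.Surjective φ := by
    intro y
    refine ⟨fun i => (((y i).val : ℕ) : ZMod (q i)), ?_⟩
    funext i
    show ZMod.castHom (hdvd i) (ZMod (d i)) (((y i).val : ℕ) : ZMod (q i)) = y i
    rw [map_natCast]
    exact ZMod.natCast_rightInverse (y i)
  have hker : φ.ker = nTors (∀ i, ZMod (q i)) n := by
    ext x
    rw [AddMonoidHom.mem_ker, mem_nTors]
    have hcomp : ∀ i, (ZMod.castHom (hdvd i) (ZMod (d i)) (x i) = 0 ↔ d i ∣ (x i).val) := by
      intro i
      have : ZMod.castHom (hdvd i) (ZMod (d i)) (x i)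
          = (((x i).val : ℕ) : ZMod (d i)) := by
        conv_lhs => rw [← ZMod.natCast_rightInverse (x i)]
        rw [map_natCast]
      rw [this, ZMod.natCast_eq_zero_iff]
    constructor
    · intro h0
      funext i
      rw [Pi.smul_apply, Pi.zero_apply, zmod_nsmul_eq_zero_iff (hq i)]
      rw [← hcomp i]
      exact congrFun h0 i
    · intro h0
      funext i
      show ZMod.castHom (hdvd i) (ZMod (d i)) (x i) = 0
      rw [hcomp i, ← zmod_nsmul_eq_zero_iff (hq i), ← Pi.smul_apply, h0]
      rfl
  exact ⟨(QuotientAddGroup.quotientAddEquivOfEq hker.symm).trans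
    (QuotientAddGroup.quotientKerEquivOfSurjective φ hsurj)⟩

theorem not_dvd_of_isOver {ι : Type} [Fintype ι] (p a : ι → ℕ) (hp : ∀ i, (p i).Prime)
    (ha : ∀ i, 1 ≤ a i) (n : ℕ) (h : IsOver (∀ i, ZMod (p i ^ a i)) n) :
    ∀ i, ¬ p i ^ a i ∣ n := by
  classical
  intro i hdvd
  set F₁ : AddSubgroup (∀ j, ZMod (p j ^ a j)) :=
    AddMonoidHom.ker (AddMonoidHom.mk' (fun x (j : {j // j ≠ i}) => x j.1)
      (fun x y => rfl)) with hF₁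
  set F₂ : AddSubgroup (∀ j, ZMod (p j ^ a j)) :=
    AddMonoidHom.ker (Pi.evalAddMonoidHom (fun j => ZMod (p j ^ a j)) i) with hF₂
  have hmem₁ : ∀ x, x ∈ F₁ ↔ ∀ j, j ≠ i → x j = 0 := by
    intro x
    rw [hF₁, AddMonoidHom.mem_ker]
    constructor
    · intro hx j hj
      exact congrFun hx ⟨j, hj⟩
    · intro hx
      funext j
      exact hx j.1 j.2
  have hmem₂ : ∀ x, x ∈ F₂ ↔ x i = 0 := fun x => Iff.rfl
  have hcompl : IsCompl F₁ F₂ := by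
    constructor
    · rw [disjoint_iff, AddSubgroup.eq_bot_iff_forall]
      intro x hx
      rw [AddSubgroup.mem_inf] at hx
      funext j
      by_cases hj : j = i
      · subst hj; exact (hmem₂ x).1 hx.2
      · exact (hmem₁ x).1 hx.1 j hj
    · rw [codisjoint_iff, AddSubgroup.eq_top_iff']
      intro x
      rw [AddSubgroup.mem_sup]
      refine ⟨Pi.single i (x i), ?_, x - Pi.single i (x i), ?_, by abel⟩
      · rw [hmem₁]
        intro j hj
        exact Pi.single_eq_of_ne hj _
      · rw [hmem₂]
        simp [Pi.single_eq_same]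
  haveI : Fact (1 < p i ^ a i) :=
    ⟨one_lt_pow₀ (hp i).one_lt (Nat.one_le_iff_ne_zero.1 (ha i))⟩
  have hne : F₁ ≠ ⊥ := by
    intro hbot
    have hmem : Pi.single i (1 : ZMod (p i ^ a i)) ∈ F₁ := by
      rw [hmem₁]
      intro j hj
      exact Pi.single_eq_of_ne hj _
    rw [hbot, AddSubgroup.mem_bot] at hmem
    have := congrFun hmem i
    rw [Pi.single_eq_same, Pi.zero_apply] at this
    exact one_ne_zero this
  obtain ⟨x, hx, hnx⟩ := h F₁ F₂ hcompl hne
  apply hnx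
  funext j
  rw [Pi.smul_apply, Pi.zero_apply]
  by_cases hj : j = i
  · subst hj
    rw [nsmul_eq_mul, ZMod.natCast_eq_zero_iff n (p j ^ a j) |>.2 hdvd, zero_mul]
  · rw [(hmem₁ x).1 hx j hj, smul_zero]

theorem gcd_prime_pow {P p : ℕ} (hp : p.Prime) (hP : P.Prime) (s k : ℕ) :
    Nat.gcd (p ^ s) (P ^ k) = P ^ (if p = P then min s k else 0) := by
  by_cases hpP : p = P
  · subst hpP
    rw [if_pos rfl]
    rcases Nat.le_total s k with hle | hle
    · rw [Nat.gcd_eq_left (pow_dvd_pow _ hle), Nat.min_eq_left hle]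
    · rw [Nat.gcd_eq_right (pow_dvd_pow _ hle), Nat.min_eq_right hle]
  · rw [if_neg hpP, pow_zero]
    exact (Nat.Coprime.pow s k ((Nat.coprime_primes hp hP).2 hpP)).gcd_eq_one

theorem fiber_card_eq {ι κ : Type} [Fintype ι] [Fintype κ] (p s : ι → ℕ) (q t : κ → ℕ)
    (hp : ∀ i, (p i).Prime) (hq : ∀ j, (q j).Prime)
    (hs : ∀ i, 1 ≤ s i) (ht : ∀ j, 1 ≤ t j)
    (hcard : ∀ m, ∏ i, Nat.gcd (p i ^ s i) m = ∏ j, Nat.gcd (q j ^ t j) m) :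
    ∀ v : ℕ × ℕ, Fintype.card {i // (p i, s i) = v} = Fintype.card {j // (q j, t j) = v} := by
  classical
  rintro ⟨P, k⟩
  have hsub : ∀ {α : Type} [Fintype α] (f g : α → ℕ),
      Fintype.card {i : α // (f i, g i) = (P, k)}
        = (Finset.univ.filter (fun i => f i = P ∧ g i = k)).card := by
    intro α _ f g
    rw [Fintype.card_subtype]
    congr 1
    apply Finset.filter_congr
    intro i _
    rw [Prod.mk.injEq]
  rw [hsub p s, hsub q t]
  by_cases hP : P.Prime
  swap
  · have hL : (Finset.univ.filter (fun i => p i = P ∧ s i = k)) = ∅ :=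
      Finset.filter_false_of_mem (by rintro i - ⟨h1, h2⟩; exact hP (h1 ▸ hp i))
    have hR : (Finset.univ.filter (fun j => q j = P ∧ t j = k)) = ∅ :=
      Finset.filter_false_of_mem (by rintro j - ⟨h1, h2⟩; exact hP (h1 ▸ hq j))
    rw [hL, hR]
    rfl
  by_cases hk : 1 ≤ k
  swap
  · have hL : (Finset.univ.filter (fun i => p i = P ∧ s i = k)) = ∅ :=
      Finset.filter_false_of_mem (by rintro i - ⟨h1, h2⟩; exact hk (h2 ▸ hs i))
    have hR : (Finset.univ.filter (fun j => q j = P ∧ t j = k)) = ∅ :=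
      Finset.filter_false_of_mem (by rintro j - ⟨h1, h2⟩; exact hk (h2 ▸ ht j))
    rw [hL, hR]
    rfl
  set A : ℕ → ℕ := fun m => ∑ i, if p i = P then min (s i) m else 0 with hAdef
  set A' : ℕ → ℕ := fun m => ∑ j, if q j = P then min (t j) m else 0 with hA'def
  have hA : ∀ m, A m = A' m := by
    intro m
    have h1 : ∏ i, Nat.gcd (p i ^ s i) (P ^ m) = P ^ A m := by
      rw [hAdef]
      rw [← Finset.prod_pow_eq_pow_sum]
      exact Finset.prod_congr rfl fun i _ => gcd_prime_pow (hp i) hP _ _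
    have h2 : ∏ j, Nat.gcd (q j ^ t j) (P ^ m) = P ^ A' m := by
      rw [hA'def]
      rw [← Finset.prod_pow_eq_pow_sum]
      exact Finset.prod_congr rfl fun j _ => gcd_prime_pow (hq j) hP _ _
    have := hcard (P ^ m)
    rw [h1, h2] at this
    exact Nat.pow_right_injective hP.two_le this
  set B : ℕ → ℕ := fun m => (Finset.univ.filter (fun i => p i = P ∧ m ≤ s i)).card with hBdef
  set B' : ℕ → ℕ := fun m => (Finset.univ.filter (fun j => q j = P ∧ m ≤ t j)).card with hB'def
  have hAB : ∀ {α : Type} [Fintype α] (f g : α → ℕ) (m : ℕ),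
      (∑ i : α, if f i = P then min (g i) (m + 1) else 0)
        = (∑ i : α, if f i = P then min (g i) m else 0)
          + (Finset.univ.filter (fun i : α => f i = P ∧ m + 1 ≤ g i)).card := by
    intro α _ f g m
    rw [Finset.card_filter, ← Finset.sum_add_distrib]
    apply Finset.sum_congr rfl
    intro i _
    split_ifs <;> omega
  have hB : ∀ m, 1 ≤ m → B m = B' m := by
    intro m hm
    obtain ⟨m', rfl⟩ : ∃ m', m = m' + 1 := ⟨m - 1, by omega⟩
    have e1 := hAB p s m'
    have e2 := hAB q t m'
    rw [show (∑ i, if p i = P then min (s i) (m' + 1) else 0) = A (m' + 1) from rfl,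
      show (∑ i, if p i = P then min (s i) m' else 0) = A m' from rfl] at e1
    rw [show (∑ j, if q j = P then min (t j) (m' + 1) else 0) = A' (m' + 1) from rfl,
      show (∑ j, if q j = P then min (t j) m' else 0) = A' m' from rfl] at e2
    have := hA (m' + 1)
    have := hA m'
    rw [hBdef, hB'def]
    simp only
    omega
  have hBC : ∀ {α : Type} [Fintype α] (f g : α → ℕ) (m : ℕ),
      (Finset.univ.filter (fun i : α => f i = P ∧ m ≤ g i)).card
        = (Finset.univ.filter (fun i : α => f i = P ∧ g i = m)).card
          + (Finset.univ.filter (fun i : α => f i = P ∧ m + 1 ≤ g i)).card := by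
    intro α _ f g m
    rw [Finset.card_filter, Finset.card_filter, Finset.card_filter, ← Finset.sum_add_distrib]
    apply Finset.sum_congr rfl
    intro i _
    split_ifs <;> omega
  have e1 := hBC p s k
  have e2 := hBC q t k
  have h3 := hB k hk
  have h4 := hB (k + 1) (by omega)
  rw [hBdef, hB'def] at h3 h4
  simp only at h3 h4
  omega

theorem exists_equiv_of_fiber_card {ι κ : Type} [Fintype ι] [Fintype κ]
    (f : ι → ℕ × ℕ) (g : κ → ℕ × ℕ)
    (h : ∀ v, Fintype.card {i // f i = v} = Fintype.card {j // g j = v}) :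
    ∃ σ : ι ≃ κ, ∀ i, g (σ i) = f i := by
  classical
  set e : ∀ v, {i // f i = v} ≃ {j // g j = v} := fun v => Fintype.equivOfCardEq (h v) with he
  set σ : ι ≃ κ := ((Equiv.sigmaFiberEquiv f).symm.trans
    (Equiv.sigmaCongrRight e)).trans (Equiv.sigmaFiberEquiv g) with hσ
  refine ⟨σ, fun i => ?_⟩
  have h1 : σ i = (e (f i) ⟨i, rfl⟩).1 := rfl
  rw [h1]
  exact (e (f i) ⟨i, rfl⟩).2

def zmodCongr {a b : ℕ} (h : a = b) : ZMod a ≃+ ZMod b := by subst h; exact AddEquiv.refl _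

def piZModReindex {ι κ : Type} (M : ι → ℕ) (N : κ → ℕ) (σ : ι ≃ κ) (h : ∀ i, N (σ i) = M i) :
    (∀ i, ZMod (M i)) ≃+ (∀ j, ZMod (N j)) :=
  (AddEquiv.piCongrRight (fun i => zmodCongr (h i).symm)).trans
    (RingEquiv.piCongrLeft (fun j => ZMod (N j)) σ).toAddEquiv

theorem gcd_pow_fact {p n a : ℕ} (hp : p.Prime) (hn : n ≠ 0) (ha : n.factorization p ≤ a) :
    Nat.gcd (p ^ a) n = p ^ (n.factorization p) := by
  apply Nat.dvd_antisymm
  · obtain ⟨c, hc, hgcd⟩ := (Nat.dvd_prime_pow hp).1 (Nat.gcd_dvd_left (p ^ a) n)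
    rw [hgcd]
    apply pow_dvd_pow
    rw [← Nat.Prime.pow_dvd_iff_le_factorization hp hn]
    rw [← hgcd]
    exact Nat.gcd_dvd_right _ _
  · exact Nat.dvd_gcd (pow_dvd_pow _ ha) (Nat.ordProj_dvd n p)

theorem quot_concrete {ι : Type} [Fintype ι] (p a : ι → ℕ) (n : ℕ) (hn : n ≠ 0)
    (hp : ∀ i, (p i).Prime) (hfact : ∀ i, n.factorization (p i) ≤ a i) :
    Nonempty (((∀ i, ZMod (p i ^ a i)) ⧸ nTors (∀ i, ZMod (p i ^ a i)) n) ≃+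
      ∀ i, ZMod (p i ^ (a i - n.factorization (p i)))) := by
  have hq : ∀ i, p i ^ a i ≠ 0 := fun i => pow_ne_zero _ (hp i).pos.ne'
  obtain ⟨e⟩ := quot_pi_equiv (fun i => p i ^ a i) hq n
  refine ⟨e.trans (AddEquiv.piCongrRight fun i => zmodCongr ?_)⟩
  rw [gcd_pow_fact (hp i) hn (hfact i), ← Nat.pow_div (hfact i) (hp i).pos]

theorem exists_part (H : Type) [AddCommGroup H] [Finite H] (n : ℕ) (hn : 1 ≤ n) :
    ∃ (F : Type) (iF : AddCommGroup F), Finite F ∧ @IsOver F iF n ∧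
      Nonempty (@AddEquiv (@HasQuotient.Quotient F (AddSubgroup F)
        (@QuotientAddGroup.instHasQuotientAddSubgroup F
          (@AddCommGroup.toAddGroup F iF)) (@nTors F iF n)) H _ _) := by
  obtain ⟨ι, hι, p, s, hp, hs, ⟨eH⟩⟩ := decompPi H
  have hnz : n ≠ 0 := Nat.one_le_iff_ne_zero.1 hn
  set a : ι → ℕ := fun i => s i + n.factorization (p i) with ha
  haveI : ∀ i, NeZero (p i ^ a i) := fun i => ⟨pow_ne_zero _ (hp i).pos.ne'⟩
  refine ⟨∀ i, ZMod (p i ^ a i), inferInstance, inferInstance, ?_, ?_⟩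
  · -- IsOver
    have hnd : ∀ i, ¬ p i ^ a i ∣ n := by
      intro i hdvd
      have hai : a i = s i + n.factorization (p i) := rfl
      have h1 : p i ^ (n.factorization (p i) + 1) ∣ n := by
        refine dvd_trans (pow_dvd_pow _ ?_) hdvd
        have := hs i
        omega
      rw [Nat.Prime.pow_dvd_iff_le_factorization (hp i) hnz] at h1
      omega
    exact isOver_of_div n hn (div_pi n hn p a hp hnd)
  · -- quotient
    have hfact : ∀ i, n.factorization (p i) ≤ a i := fun i => by
      have hai : a i = s i + n.factorization (p i) := rfl
      omega
    obtain ⟨e1⟩ := quot_concrete p a n hnz hp hfact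
    refine ⟨e1.trans ((AddEquiv.piCongrRight fun i => zmodCongr ?_).trans eH.symm)⟩
    have hai : a i = s i + n.factorization (p i) := rfl
    congr 1
    omega

theorem uniq_part (H : Type) [AddCommGroup H] (n : ℕ) (hn : 1 ≤ n)
    (F F' : Type) [AddCommGroup F] [AddCommGroup F'] (hF : Finite F) (hF' : Finite F')
    (hO : IsOver F n) (hO' : IsOver F' n)
    (h1 : Nonempty ((F ⧸ nTors F n) ≃+ H)) (h2 : Nonempty ((F' ⧸ nTors F' n) ≃+ H)) :
    Nonempty (F ≃+ F') := by
  have hnz : n ≠ 0 := Nat.one_le_iff_ne_zero.1 hn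
  obtain ⟨ι, hι, p, a, hp, ha1, ⟨eF⟩⟩ := decompPi F
  obtain ⟨κ, hκ, q, b, hq, hb1, ⟨eF'⟩⟩ := decompPi F'
  have hnd : ∀ i, ¬ p i ^ a i ∣ n :=
    not_dvd_of_isOver p a hp ha1 n (isOver_congr eF n hO)
  have hnd' : ∀ j, ¬ q j ^ b j ∣ n :=
    not_dvd_of_isOver q b hq hb1 n (isOver_congr eF' n hO')
  have hflt : ∀ i, n.factorization (p i) < a i := by
    intro i
    by_contra hle
    push_neg at hle
    exact hnd i (dvd_trans (pow_dvd_pow _ hle) (Nat.ordProj_dvd n (p i)))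
  have hflt' : ∀ j, n.factorization (q j) < b j := by
    intro j
    by_contra hle
    push_neg at hle
    exact hnd' j (dvd_trans (pow_dvd_pow _ hle) (Nat.ordProj_dvd n (q j)))
  set s : ι → ℕ := fun i => a i - n.factorization (p i) with hsdef
  set t : κ → ℕ := fun j => b j - n.factorization (q j) with htdef
  obtain ⟨e1⟩ := quot_concrete p a n hnz hp (fun i => (hflt i).le)
  obtain ⟨e1'⟩ := quot_concrete q b n hnz hq (fun j => (hflt' j).le)
  have EH : (∀ i, ZMod (p i ^ s i)) ≃+ H :=
    e1.symm.trans ((quotNTorsCongr eF n).symm.trans h1.some)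
  have EH' : (∀ j, ZMod (q j ^ t j)) ≃+ H :=
    e1'.symm.trans ((quotNTorsCongr eF' n).symm.trans h2.some)
  have EQ : (∀ i, ZMod (p i ^ s i)) ≃+ (∀ j, ZMod (q j ^ t j)) := EH.trans EH'.symm
  have hcounts : ∀ m, ∏ i, Nat.gcd (p i ^ s i) m = ∏ j, Nat.gcd (q j ^ t j) m := by
    intro m
    have c1 := card_pi_tors (fun i => p i ^ s i) (fun i => pow_ne_zero _ (hp i).pos.ne') m
    have c2 := card_pi_tors (fun j => q j ^ t j) (fun j => pow_ne_zero _ (hq j).pos.ne') m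
    rw [← c1, ← c2]
    exact card_tors_congr EQ m
  have hs1 : ∀ i, 1 ≤ s i := fun i => by
    have hsi : s i = a i - n.factorization (p i) := rfl
    have := hflt i
    omega
  have ht1 : ∀ j, 1 ≤ t j := fun j => by
    have htj : t j = b j - n.factorization (q j) := rfl
    have := hflt' j
    omega
  have hfib := fiber_card_eq p s q t hp hq hs1 ht1 hcounts
  obtain ⟨σ, hσ⟩ := exists_equiv_of_fiber_card (fun i => (p i, s i)) (fun j => (q j, t j)) hfib
  have hMN : ∀ i, q (σ i) ^ b (σ i) = p i ^ a i := by
    intro i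
    have hqp : q (σ i) = p i := congrArg Prod.fst (hσ i)
    have hts : t (σ i) = s i := congrArg Prod.snd (hσ i)
    have hsi : s i = a i - n.factorization (p i) := rfl
    have htj : t (σ i) = b (σ i) - n.factorization (q (σ i)) := rfl
    have hfq : n.factorization (q (σ i)) = n.factorization (p i) := by rw [hqp]
    have h5 := hflt' (σ i)
    have h6 := hflt i
    rw [hqp]
    congr 1
    omega
  exact ⟨eF.trans ((piZModReindex _ _ σ hMN).trans eF'.symm)⟩

/-- For every finite abelian group `H` and `n ≥ 1` there exists
a finite abelian group `F` with `F / F₍ₙ₎ ≅ H` and `F` over `n`, and such an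
`F` is unique up to isomorphism. -/
theorem exists_unique_over_group (H : Type) [AddCommGroup H] [Finite H]
    (n : ℕ) (hn : 1 ≤ n) :
    (∃ (F : Type) (iF : AddCommGroup F), Finite F ∧ @IsOver F iF n ∧
       Nonempty (@AddEquiv (@HasQuotient.Quotient F (AddSubgroup F)
         (@QuotientAddGroup.instHasQuotientAddSubgroup F
           (@AddCommGroup.toAddGroup F iF)) (@nTors F iF n)) H _ _)) ∧
    (∀ (F F' : Type) [AddCommGroup F] [AddCommGroup F'], Finite F → Finite F' →
       IsOver F n → IsOver F' n →
       Nonempty ((F ⧸ nTors F n) ≃+ H) → Nonempty ((F' ⧸ nTors F' n) ≃+ H) →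
       Nonempty (F ≃+ F')) := by
  constructor
  · exact exists_part H n hn
  · intro F F' _ _ hF hF' hO hO' h1 h2
    exact uniq_part H n hn F F' hF hF' hO hO' h1 h2
end

section
/- The characteristic subgroups of the free abelian group A = ⊕_ℕ ℤ of countably infinite rank are exactly the subgroups r·A for r = 0, 1, 2, …. -/
/-- A subgroup `K` of an abelian group is *characteristic* if `φ(K) = K` for
every automorphism `φ`. -/
def IsCharSubgroup {G : Type*} [AddCommGroup G] (K : AddSubgroup G) : Prop :=
  ∀ φ : G ≃+ G, K.map φ.toAddMonoidHom = K

noncomputable def myTransvection (i j : ℕ) (h : j ≠ i) : (ℕ →₀ ℤ) ≃+ (ℕ →₀ ℤ) where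
  toFun x := x + Finsupp.single j (x i)
  invFun x := x - Finsupp.single j (x i)
  left_inv x := by simp [Finsupp.add_apply, Finsupp.single_apply, h]
  right_inv x := by simp [Finsupp.sub_apply, Finsupp.single_apply, h]
  map_add' x y := by
    ext k
    simp [Finsupp.single_apply]
    split <;> ring

lemma char_mem {K : AddSubgroup (ℕ →₀ ℤ)} (hK : IsCharSubgroup K)
    (φ : (ℕ →₀ ℤ) ≃+ (ℕ →₀ ℤ)) {x : ℕ →₀ ℤ} (hx : x ∈ K) : φ x ∈ K := by
  rw [← hK φ]; exact ⟨x, hx, rfl⟩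

lemma single_coord_mem {K : AddSubgroup (ℕ →₀ ℤ)} (hK : IsCharSubgroup K)
    {x : ℕ →₀ ℤ} (hx : x ∈ K) (i j : ℕ) : Finsupp.single j (x i) ∈ K := by
  obtain ⟨k, hk⟩ := Infinite.exists_notMem_finset (insert i x.support)
  simp only [Finset.mem_insert, not_or, Finsupp.mem_support_iff, not_not] at hk
  have h1 : Finsupp.single k (x i) ∈ K := by
    have := char_mem hK (myTransvection i k hk.1) hx
    have h2 := K.sub_mem this hx
    simpa [myTransvection] using h2
  have := char_mem hK (Finsupp.domCongr (Equiv.swap k j)) h1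
  simpa [Finsupp.domCongr, Equiv.swap_apply_left] using this

/-- The characteristic subgroups of the free abelian group
`A = ⊕_ℕ ℤ` are exactly the subgroups `r • A`, `r = 0, 1, 2, …`. -/
theorem charSubgroups_of_freeAbelian (K : AddSubgroup (ℕ →₀ ℤ)) :
    IsCharSubgroup K ↔ ∃ r : ℕ, K = AddMonoidHom.range (smulAddHom ℕ (ℕ →₀ ℤ) r) := by
  constructor
  · intro hK
    obtain ⟨a, ha⟩ := Int.subgroup_cyclic (K.comap (Finsupp.singleAddHom 0))
    refine ⟨a.natAbs, ?_⟩
    have hmemS : ∀ c : ℤ, Finsupp.single 0 c ∈ K ↔ (a:ℤ) ∣ c := by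
      intro c
      have : Finsupp.single 0 c ∈ K ↔ c ∈ K.comap (Finsupp.singleAddHom 0) := by
        simp [AddSubgroup.mem_comap]
      rw [this, ha, AddSubgroup.mem_closure_singleton]
      constructor
      · rintro ⟨n, rfl⟩; exact ⟨n, by rw [smul_eq_mul, mul_comm]⟩
      · rintro ⟨n, rfl⟩; exact ⟨n, by rw [smul_eq_mul, mul_comm]⟩
    have hsingle : ∀ (j : ℕ) (c : ℤ), a ∣ c → Finsupp.single j c ∈ K := by
      intro j c hc
      have h0 : Finsupp.single 0 c ∈ K := (hmemS c).2 hc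
      have := char_mem hK (Finsupp.domCongr (Equiv.swap 0 j)) h0
      simpa [Finsupp.domCongr, Equiv.swap_apply_left] using this
    ext x
    simp only [AddMonoidHom.mem_range, smulAddHom_apply]
    constructor
    · intro hx
      have hdvd : ∀ i, (a : ℤ) ∣ x i := fun i =>
        (hmemS (x i)).1 (single_coord_mem hK hx i 0)
      refine ⟨x.mapRange (fun c => c / (a.natAbs : ℤ)) (by simp), ?_⟩
      ext i
      have h : (a.natAbs : ℤ) ∣ x i := Int.natAbs_dvd.2 (hdvd i)
      rw [Finsupp.smul_apply, Finsupp.mapRange_apply, nsmul_eq_mul]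
      exact Int.mul_ediv_cancel' h
    · rintro ⟨y, rfl⟩
      induction y using Finsupp.induction with
      | zero => simpa using K.zero_mem
      | single_add j c f _ _ ih =>
        rw [smul_add]
        refine K.add_mem ?_ ih
        rw [Finsupp.smul_single, nsmul_eq_mul]
        exact hsingle j _ ((Int.dvd_natAbs.2 dvd_rfl).mul_right c)
  · rintro ⟨r, rfl⟩ φ
    ext x
    simp only [AddSubgroup.mem_map, AddMonoidHom.mem_range, smulAddHom_apply]
    constructor
    · rintro ⟨_, ⟨y, rfl⟩, rfl⟩
      exact ⟨φ y, by simp [map_nsmul]⟩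
    · rintro ⟨y, rfl⟩
      exact ⟨r • φ.symm y, ⟨φ.symm y, rfl⟩, by simp [map_nsmul]⟩
end

section
/- For n ≥ 2, the characteristic subgroups of A_n = ⊕_ℕ (ℤ/nℤ) are exactly the trivial subgroup together with the subgroups r·A_n where r is a positive divisor of n. -/
/-- Transvection automorphism: add `c` times coordinate `i` to coordinate `j`. -/
noncomputable def transvec {n : ℕ} (i j : ℕ) (h : j ≠ i) (c : ZMod n) :
    (ℕ →₀ ZMod n) ≃+ (ℕ →₀ ZMod n) where
  toFun x := x + Finsupp.single j (c * x i)
  invFun x := x - Finsupp.single j (c * x i)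
  left_inv x := by
    have h1 : (x + Finsupp.single j (c * x i)) i = x i := by
      simp [Finsupp.single_apply, h]
    show (x + Finsupp.single j (c * x i)) -
      Finsupp.single j (c * (x + Finsupp.single j (c * x i)) i) = x
    rw [h1]; abel
  right_inv x := by
    have h1 : (x - Finsupp.single j (c * x i)) i = x i := by
      simp [Finsupp.single_apply, h]
    show (x - Finsupp.single j (c * x i)) +
      Finsupp.single j (c * (x - Finsupp.single j (c * x i)) i) = x
    rw [h1]; abel
  map_add' x y := by
    simp only [Finsupp.add_apply, mul_add, Finsupp.single_add]
    abel

lemma mem_of_char {n : ℕ} {K : AddSubgroup (ℕ →₀ ZMod n)} (hK : IsCharSubgroup K)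
    (φ : (ℕ →₀ ZMod n) ≃+ (ℕ →₀ ZMod n)) {x} (hx : x ∈ K) : φ x ∈ K := by
  rw [← hK φ]
  exact ⟨x, hx, rfl⟩

/-- Key lemma: from `x ∈ K` we can extract any multiple of any coordinate as a
single supported anywhere. -/
lemma single_mem {n : ℕ} {K : AddSubgroup (ℕ →₀ ZMod n)} (hK : IsCharSubgroup K)
    {x} (hx : x ∈ K) (i j : ℕ) (c : ZMod n) : Finsupp.single j (c * x i) ∈ K := by
  set j' : ℕ := max i j + 1 with hj'
  have hji : j' ≠ i := by omega
  have h1 : Finsupp.single j' (c * x i) ∈ K := by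
    have hm := K.sub_mem (mem_of_char hK (transvec i j' hji c) hx) hx
    have heq : transvec i j' hji c x - x = Finsupp.single j' (c * x i) := by
      show (x + Finsupp.single j' (c * x i)) - x = _
      abel
    rwa [heq] at hm
  have hm2 := mem_of_char hK (Finsupp.domCongr (Equiv.swap j' j)) h1
  have heq2 : (Finsupp.domCongr (M := ZMod n) (Equiv.swap j' j))
      (Finsupp.single j' (c * x i)) = Finsupp.single j (c * x i) := by
    rw [Finsupp.domCongr_apply, Finsupp.equivMapDomain_single, Equiv.swap_apply_left]
  rwa [heq2] at hm2

/-- For `n ≥ 2`, the characteristic subgroups of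
`Aₙ = ⊕_ℕ ℤ/nℤ` are exactly the trivial subgroup together with the subgroups
`r • Aₙ` for positive divisors `r` of `n`. -/
theorem charSubgroups_of_elementary (n : ℕ) (hn : 2 ≤ n)
    (K : AddSubgroup (ℕ →₀ ZMod n)) :
    IsCharSubgroup K ↔
      K = ⊥ ∨ ∃ r : ℕ, 0 < r ∧ r ∣ n ∧
        K = AddMonoidHom.range (smulAddHom ℕ (ℕ →₀ ZMod n) r) := by
  haveI : NeZero n := ⟨by omega⟩
  haveI : IsPrincipalIdealRing (ZMod n) :=
    IsPrincipalIdealRing.of_surjective (Int.castRingHom (ZMod n)) ZMod.intCast_surjective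
  constructor
  · intro hK
    right
    -- the ideal of coordinates of elements of `K`
    set S : Ideal (ZMod n) :=
      { carrier := {a | Finsupp.single 0 a ∈ K}
        add_mem' := fun {a b} ha hb => by
          have := K.add_mem ha hb
          simpa [Finsupp.single_add] using this
        zero_mem' := by simpa using K.zero_mem
        smul_mem' := fun c a ha => by
          have := single_mem hK ha 0 0 c
          simpa using this } with hS
    have hmemS : ∀ a : ZMod n, a ∈ S ↔ Finsupp.single 0 a ∈ K := fun a => Iff.rfl
    -- membership in K is equivalent to all coordinates lying in S
    have hKS : ∀ x : ℕ →₀ ZMod n, x ∈ K ↔ ∀ i, x i ∈ S := by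
      intro x
      constructor
      · intro hx i
        have := single_mem hK hx i 0 1
        simpa [hmemS] using this
      · intro hx
        have : x = x.sum fun i a => Finsupp.single i a := (Finsupp.sum_single x).symm
        rw [this]
        apply AddSubgroup.sum_mem
        intro i _
        have h0 : Finsupp.single 0 (x i) ∈ K := hx i
        have := single_mem hK h0 0 i 1
        simpa using this
    -- S is principal
    obtain ⟨g, hg0⟩ := (IsPrincipalIdealRing.principal S).1
    have hg : S = Ideal.span {g} := hg0
    set r : ℕ := Nat.gcd g.val n with hr
    have hrn : r ∣ n := Nat.gcd_dvd_right _ _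
    have hrpos : 0 < r := Nat.gcd_pos_of_pos_right _ (by omega)
    -- S = span {(r : ZMod n)}
    have hspan : S = Ideal.span {(r : ZMod n)} := by
      rw [hg]
      apply le_antisymm
      · rw [Ideal.span_le, Set.singleton_subset_iff]
        rw [SetLike.mem_coe, Ideal.mem_span_singleton]
        have : (r : ℕ) ∣ g.val := Nat.gcd_dvd_left _ _
        have h2 : ((r : ℕ) : ZMod n) ∣ (g.val : ZMod n) := Nat.cast_dvd_cast this
        simpa [ZMod.natCast_val, ZMod.cast_id] using h2
      · rw [Ideal.span_le, Set.singleton_subset_iff]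
        rw [SetLike.mem_coe, Ideal.mem_span_singleton]
        have hb : (r : ℤ) = g.val * Nat.gcdA g.val n + n * Nat.gcdB g.val n :=
          Nat.gcd_eq_gcd_ab g.val n
        have : ((r : ℤ) : ZMod n) = ((g.val * Nat.gcdA g.val n + n * Nat.gcdB g.val n : ℤ) : ZMod n) := by
          exact_mod_cast congrArg (fun z : ℤ => (z : ZMod n)) hb
        push_cast at this
        rw [ZMod.natCast_self] at this
        refine ⟨(Nat.gcdA g.val n : ZMod n), ?_⟩
        rw [this]
        simp [ZMod.natCast_val, ZMod.cast_id, mul_comm]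
    refine ⟨r, hrpos, hrn, ?_⟩
    ext x
    rw [hKS x, AddMonoidHom.mem_range]
    constructor
    · intro hx
      -- build preimage
      have hdvd : ∀ i, (r : ZMod n) ∣ x i := by
        intro i
        have := hx i
        rw [hspan, Ideal.mem_span_singleton] at this
        exact this
      refine ⟨Finsupp.onFinset x.support
        (fun i => if h : x i = 0 then 0 else (hdvd i).choose) ?_, ?_⟩
      · intro i hi
        simp only [ne_eq, dite_eq_left_iff, not_forall] at hi
        exact Finsupp.mem_support_iff.mpr hi.choose
      · ext i
        simp only [smulAddHom_apply, Finsupp.smul_apply, Finsupp.onFinset_apply]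
        by_cases h : x i = 0
        · simp [h]
        · rw [dif_neg h, nsmul_eq_mul, ← (hdvd i).choose_spec]
    · rintro ⟨y, rfl⟩ i
      rw [hspan, Ideal.mem_span_singleton]
      simp only [smulAddHom_apply, Finsupp.smul_apply]
      exact ⟨y i, by rw [nsmul_eq_mul]⟩
  · rintro (rfl | ⟨r, -, -, rfl⟩) φ
    · simp
    · ext x
      simp only [AddSubgroup.mem_map, AddMonoidHom.mem_range, smulAddHom_apply]
      constructor
      · rintro ⟨w, ⟨y, rfl⟩, rfl⟩
        exact ⟨φ y, (map_nsmul φ.toAddMonoidHom r y).symm⟩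
      · rintro ⟨y, rfl⟩
        exact ⟨r • φ.symm y, ⟨φ.symm y, rfl⟩, by
          rw [map_nsmul]; simp⟩
end

section
/- Let G be a countable abelian group and Γ a group of automorphisms of G. The action of Γ on the Pontryagin dual Ĝ (with Haar probability measure) is weakly mixing if and only if the induced action of Γ on G has no finite orbits other than {0}. -/
open MeasureTheory
set_option linter.unusedSectionVars false

noncomputable section

variable {G : Type} [AddCommGroup G] [TopologicalSpace G] [DiscreteTopology G]

/-- The Pontryagin dual of `G`: continuous homomorphisms to `ℝ/ℤ`,
with the compact-open topology. -/
abbrev PDual (G : Type) [AddCommGroup G] [TopologicalSpace G] :=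
  ContinuousAddMonoidHom G (AddCircle (1 : ℝ))

/-- The dual action of an automorphism `φ` of `G` on the Pontryagin dual:
`χ ↦ χ ∘ φ`. -/
def dualAct (φ : AddAut G) (χ : PDual G) : PDual G :=
  χ.comp ⟨φ.toAddMonoidHom, continuous_of_discreteTopology⟩

variable [MeasurableSpace (PDual G)]

/-- The constant function `1` as an element of `L²(Ĝ, μ)`. -/
def const1 (μ : Measure (PDual G)) [IsProbabilityMeasure μ] : Lp ℂ 2 μ :=
  (memLp_const (1 : ℂ)).toLp fun _ => (1 : ℂ)

/-- The action of `Γ ≤ Aut(G)` on `(Ĝ, μ)` is *weakly mixing* if the only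
finite-dimensional subspaces of `L²(Ĝ, μ)` invariant under the Koopman
operators of the (dual) action of `Γ` are the zero subspace and the constants. -/
def IsWeaklyMixing (μ : Measure (PDual G)) [IsProbabilityMeasure μ]
    (Γ : AddSubgroup (AddAut G))
    (hmp : ∀ φ : AddAut G, MeasurePreserving (dualAct φ) μ μ) : Prop :=
  ∀ V : Submodule ℂ (Lp ℂ 2 μ), FiniteDimensional ℂ V →
    (∀ φ ∈ Γ, ∀ f ∈ V, Lp.compMeasurePreserving (dualAct φ) (hmp φ) f ∈ V) →
    V = ⊥ ∨ V = Submodule.span ℂ {const1 μ}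

/-! ### Auxiliary material -/

section DiscreteDomain

open Topology

variable (X A : Type*) [TopologicalSpace X] [DiscreteTopology X] [TopologicalSpace A]

theorem aux_isInducing_coe : Topology.IsInducing ((⇑) : C(X, A) → (X → A)) := by
  refine ⟨le_antisymm (continuous_iff_le_induced.mp continuous_coeFun) ?_⟩
  rw [ContinuousMap.compactOpen_eq]
  refine le_generateFrom ?_
  rintro s ⟨K, hK, U, hU, rfl⟩
  have hKf : Set.Finite K := hK.finite DiscreteTopology.isDiscrete
  refine isOpen_induced_iff.mpr ⟨Set.pi K fun _ => U, isOpen_set_pi hKf fun _ _ => hU, ?_⟩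
  ext f
  simp [Set.MapsTo, Set.mem_pi]

/-- For a discrete domain, `C(X, A)` is homeomorphic to `X → A`. -/
def auxHomeoCoe : C(X, A) ≃ₜ (X → A) :=
  (ContinuousMap.equivFnOfDiscrete (α := X) (β := A)).toHomeomorphOfIsInducing (aux_isInducing_coe X A)

end DiscreteDomain

section PDualInstances

variable (G) [Countable G]

theorem pdual_isClosedEmbedding :
    Topology.IsClosedEmbedding (fun x : PDual G => (⇑x : G → AddCircle (1 : ℝ))) := by
  have h1 := ContinuousAddMonoidHom.isClosedEmbedding_toContinuousMap G (AddCircle (1 : ℝ))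
  have h2 := (auxHomeoCoe G (AddCircle (1 : ℝ))).isClosedEmbedding
  exact h2.comp h1

instance : CompactSpace (PDual G) := by
  have h := pdual_isClosedEmbedding G
  rw [← isCompact_univ_iff]
  have : Set.univ = (fun x : PDual G => (⇑x : G → AddCircle (1 : ℝ))) ⁻¹'
      (Set.range fun x : PDual G => (⇑x : G → AddCircle (1 : ℝ))) := by
    ext x; simp
  rw [this]
  exact h.isCompact_preimage (h.isClosed_range.isCompact)

instance : TopologicalSpace.PseudoMetrizableSpace (PDual G) :=
  (pdual_isClosedEmbedding G).isInducing.pseudoMetrizableSpace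

instance : SecondCountableTopology (PDual G) :=
  (pdual_isClosedEmbedding G).isInducing.secondCountableTopology

end PDualInstances

section Characters

open scoped ComplexConjugate InnerProductSpace

local notation "⟪" x ", " y "⟫" => @inner ℂ _ _ x y

@[simp] theorem pdual_add_apply (x y : PDual G) (g : G) : (x + y) g = x g + y g := rfl

/-- The character of `Ĝ` associated to `g : G`. -/
def chr (g : G) : C(PDual G, ℂ) :=
  ⟨fun x => (AddCircle.toCircle (x g) : ℂ),
    continuous_subtype_val.comp
      (AddCircle.continuous_toCircle.comp (continuous_eval_const g))⟩

@[simp] theorem chr_apply (g : G) (x : PDual G) :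
    chr g x = (AddCircle.toCircle (x g) : ℂ) := rfl

theorem chr_zero : chr (G := G) 0 = 1 := by
  ext x
  simp [chr_apply, map_zero]

theorem chr_add (g h : G) : chr (G := G) (g + h) = chr g * chr h := by
  ext x
  simp [chr_apply, map_add, AddCircle.toCircle_add]

theorem toCircle_neg (a : AddCircle (1 : ℝ)) :
    AddCircle.toCircle (-a) = (AddCircle.toCircle a)⁻¹ := by
  apply eq_inv_of_mul_eq_one_left
  rw [← AddCircle.toCircle_add, neg_add_cancel, AddCircle.toCircle_zero]

theorem chr_neg (g : G) : chr (G := G) (-g) = star (chr g) := by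
  ext x
  simp only [chr_apply, ContinuousMap.star_apply, map_neg, toCircle_neg]
  rw [Circle.coe_inv_eq_conj]
  rfl

theorem chr_dualAct (φ : AddAut G) (g : G) (x : PDual G) :
    chr g (dualAct φ x) = chr (φ g) x := rfl

theorem norm_chr_apply (g : G) (x : PDual G) : ‖chr g x‖ = 1 := by
  simp [chr_apply, Circle.norm_coe]

/-- Characters separate the elements of `G` from zero. -/
theorem exists_pdual_ne_zero {g : G} (hg : g ≠ 0) : ∃ x : PDual G, x g ≠ 0 := by
  obtain ⟨c, hc⟩ := CharacterModule.exists_character_apply_ne_zero_of_ne_zero hg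
  classical
  -- the embedding `ℚ/ℤ → ℝ/ℤ`
  let j : AddCircle (1 : ℚ) →+ AddCircle (1 : ℝ) :=
    QuotientAddGroup.map (AddSubgroup.zmultiples (1 : ℚ)) (AddSubgroup.zmultiples (1 : ℝ))
      (Rat.castHom ℝ).toAddMonoidHom (by
        rintro q hq
        simp only [AddSubgroup.mem_zmultiples_iff] at hq
        obtain ⟨n, rfl⟩ := hq
        simp only [AddSubgroup.mem_comap, AddSubgroup.mem_zmultiples_iff]
        exact ⟨n, by push_cast; simp⟩)
  have hj : ∀ a : AddCircle (1 : ℚ), a ≠ 0 → j a ≠ 0 := by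
    intro a ha h
    apply ha
    induction a using QuotientAddGroup.induction_on with
    | H q =>
      have hq : j ((q : ℚ) : AddCircle (1 : ℚ)) = (((q : ℚ) : ℝ) : AddCircle (1 : ℝ)) := rfl
      rw [hq] at h
      rw [AddCircle.coe_eq_zero_iff] at h ⊢
      obtain ⟨n, hn⟩ := h
      refine ⟨n, ?_⟩
      simp only [zsmul_eq_mul, mul_one] at hn ⊢
      exact_mod_cast hn
  exact ⟨⟨j.comp c, continuous_of_discreteTopology⟩, hj _ hc⟩

variable [Countable G] [BorelSpace (PDual G)]
variable (μ : Measure (PDual G)) [μ.IsAddHaarMeasure] [IsProbabilityMeasure μ]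

theorem integrable_chr (g : G) : Integrable (fun x => chr g x) μ := by
  refine ⟨(chr g).continuous.aestronglyMeasurable, ?_⟩
  refine MeasureTheory.HasFiniteIntegral.of_bounded (C := 1) ?_
  filter_upwards with x
  rw [norm_chr_apply]

theorem integral_chr_eq_zero {g : G} (hg : g ≠ 0) : ∫ x, chr g x ∂μ = 0 := by
  obtain ⟨x₀, hx₀⟩ := exists_pdual_ne_zero hg
  have h1 : chr g x₀ ≠ 1 := by
    simp only [chr_apply]
    intro h
    apply hx₀
    apply AddCircle.injective_toCircle (one_ne_zero (α := ℝ))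
    rw [AddCircle.toCircle_zero]
    exact Circle.coe_eq_one.mp h
  have h2 : ∫ x, chr g (x₀ + x) ∂μ = ∫ x, chr g x ∂μ :=
    integral_add_left_eq_self (fun x => chr g x) x₀
  have h3 : ∀ x : PDual G, chr g (x₀ + x) = chr g x₀ * chr g x := by
    intro x
    simp [chr_apply, AddCircle.toCircle_add]
  simp_rw [h3] at h2
  rw [integral_const_mul] at h2
  have h4 : (chr g x₀ - 1) * ∫ x, chr g x ∂μ = 0 := by
    rw [sub_mul, one_mul, h2, sub_self]
  rcases mul_eq_zero.mp h4 with h | h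
  · exact absurd (sub_eq_zero.mp h) h1
  · exact h

/-- The characters as elements of `L²`. -/
def eL (g : G) : Lp ℂ 2 μ := ContinuousMap.toLp (E := ℂ) 2 μ ℂ (chr g)

theorem eL_ae (g : G) : eL μ g =ᵐ[μ] fun x => chr g x :=
  ContinuousMap.coeFn_toLp (E := ℂ) (𝕜 := ℂ) μ (chr g)

theorem eL_zero : eL μ (0 : G) = const1 μ := by
  refine Lp.ext ?_
  unfold const1
  filter_upwards [eL_ae μ 0, MemLp.coeFn_toLp (memLp_const (1 : ℂ) (μ := μ))] with x h1 h2
  rw [h1, h2, chr_zero]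
  rfl

theorem inner_eL (g h : G) : ⟪eL μ g, eL μ h⟫ = ∫ x, chr (h - g) x ∂μ := by
  rw [MeasureTheory.L2.inner_def]
  have h1 : ∀ᵐ x ∂μ, ⟪(eL μ g : PDual G →₂[μ] ℂ) x, (eL μ h : PDual G →₂[μ] ℂ) x⟫
      = chr (h - g) x := by
    filter_upwards [eL_ae μ g, eL_ae μ h] with x hg' hh'
    rw [hg', hh', RCLike.inner_apply]
    have : (starRingEnd ℂ) (chr g x) = chr (-g) x := by
      rw [chr_neg]; rfl
    rw [this, ← ContinuousMap.mul_apply, ← chr_add]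
    congr 1
    abel
  rw [integral_congr_ae h1]

theorem inner_eL_ite (g h : G) [Decidable (g = h)] :
    ⟪eL μ g, eL μ h⟫ = if g = h then (1 : ℂ) else 0 := by
  rw [inner_eL]
  split_ifs with hgh
  · subst hgh
    rw [sub_self]
    have : ∀ x : PDual G, chr (0 : G) x = 1 := by
      intro x; rw [chr_zero]; rfl
    simp_rw [this]
    simp
  · exact integral_chr_eq_zero μ (sub_ne_zero.mpr (Ne.symm hgh))

theorem orthonormal_eL : Orthonormal ℂ (eL (G := G) μ) := by
  classical
  rw [orthonormal_iff_ite]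
  intro g h
  rw [inner_eL_ite μ g h]

theorem eL_ne_zero (g : G) : eL μ g ≠ 0 := by
  classical
  intro h
  have h2 := inner_eL_ite μ g g
  rw [h, if_pos rfl] at h2
  simp at h2

variable (hmp : ∀ φ : AddAut G, MeasurePreserving (dualAct φ) μ μ)

theorem koopman_eL (φ : AddAut G) (g : G) :
    Lp.compMeasurePreserving (dualAct φ) (hmp φ) (eL μ g) = eL μ (φ g) := by
  refine Lp.ext ?_
  have h1 := Lp.coeFn_compMeasurePreserving (eL μ g) (hmp φ)
  have h2 : (eL μ g : PDual G → ℂ) ∘ (dualAct φ) =ᵐ[μ] (fun x => chr g x) ∘ (dualAct φ) :=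
    MeasureTheory.ae_eq_comp (hmp φ).measurable.aemeasurable
      (by rw [(hmp φ).map_eq]; exact eL_ae μ g)
  refine (h1.trans (h2.trans ?_)).trans (eL_ae μ (φ g)).symm
  filter_upwards with x
  exact chr_dualAct φ g x

theorem koopman_inner (φ : AddAut G) (f h : Lp ℂ 2 μ) :
    ⟪Lp.compMeasurePreserving (dualAct φ) (hmp φ) f,
      Lp.compMeasurePreserving (dualAct φ) (hmp φ) h⟫ = ⟪f, h⟫ :=
  (Lp.compMeasurePreservingₗᵢ ℂ (dualAct φ) (hmp φ)).inner_map_map f h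

theorem koopman_smul (φ : AddAut G) (c : ℂ) (f : Lp ℂ 2 μ) :
    Lp.compMeasurePreserving (dualAct φ) (hmp φ) (c • f)
      = c • Lp.compMeasurePreserving (dualAct φ) (hmp φ) f :=
  (Lp.compMeasurePreservingₗ ℂ (dualAct φ) (hmp φ)).map_smul c f

/-- The `*`-subalgebra of `C(Ĝ, ℂ)` spanned by the characters. -/
def chrAlg : StarSubalgebra ℂ C(PDual G, ℂ) where
  carrier := (Submodule.span ℂ (Set.range (chr (G := G))) : Submodule ℂ C(PDual G, ℂ))
  add_mem' := fun ha hb => Submodule.add_mem _ ha hb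
  zero_mem' := Submodule.zero_mem _
  mul_mem' := by
    intro a b ha hb
    have h : a * b ∈ Submodule.span ℂ (Set.range (chr (G := G))) *
        Submodule.span ℂ (Set.range (chr (G := G))) := Submodule.mul_mem_mul ha hb
    rw [Submodule.span_mul_span] at h
    refine Submodule.span_mono ?_ h
    rintro x ⟨u, ⟨g, rfl⟩, v, ⟨g', rfl⟩, rfl⟩
    exact ⟨g + g', chr_add g g'⟩
  one_mem' := Submodule.subset_span ⟨0, chr_zero⟩
  algebraMap_mem' := fun c => by
    rw [Algebra.algebraMap_eq_smul_one]
    exact Submodule.smul_mem _ c (Submodule.subset_span ⟨0, chr_zero⟩)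
  star_mem' := by
    intro a ha
    induction ha using Submodule.span_induction with
    | mem x hx =>
      obtain ⟨g, rfl⟩ := hx
      rw [← chr_neg]
      exact Submodule.subset_span ⟨-g, rfl⟩
    | zero => rw [star_zero]; exact Submodule.zero_mem _
    | add x y hx hy ihx ihy => rw [star_add]; exact Submodule.add_mem _ ihx ihy
    | smul c x hx ihx => rw [star_smul]; exact Submodule.smul_mem _ _ ihx

theorem chrAlg_separates : (chrAlg (G := G)).SeparatesPoints := by
  intro x y hxy
  obtain ⟨g, hg⟩ : ∃ g, x g ≠ y g := by
    by_contra h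
    push_neg at h
    exact hxy (DFunLike.ext x y h)
  refine ⟨chr g, ⟨chr g, Submodule.subset_span ⟨g, rfl⟩, rfl⟩, ?_⟩
  simp only [chr_apply]
  intro h
  exact hg (AddCircle.injective_toCircle (one_ne_zero (α := ℝ)) (Subtype.coe_injective h))

theorem dense_span_eL :
    (Submodule.span ℂ (Set.range (eL (G := G) μ))).topologicalClosure = ⊤ := by
  rw [← Submodule.dense_iff_topologicalClosure_eq_top]
  have hA : (chrAlg (G := G)).topologicalClosure = ⊤ :=
    ContinuousMap.starSubalgebra_topologicalClosure_eq_top_of_separatesPoints _ chrAlg_separates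
  have hdense : Dense ((Submodule.span ℂ (Set.range (chr (G := G))) :
      Submodule ℂ C(PDual G, ℂ)) : Set C(PDual G, ℂ)) := by
    rw [dense_iff_closure_eq]
    have := congrArg (fun S : StarSubalgebra ℂ C(PDual G, ℂ) => (S : Set C(PDual G, ℂ))) hA
    exact this
  have hrange : DenseRange (ContinuousMap.toLp (E := ℂ) 2 μ ℂ : C(PDual G, ℂ) →L[ℂ] Lp ℂ 2 μ) :=
    ContinuousMap.toLp_denseRange (E := ℂ) (𝕜 := ℂ) (μ := μ) (p := 2) ENNReal.ofNat_ne_top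
  have himg : Dense ((ContinuousMap.toLp (E := ℂ) 2 μ ℂ) ''
      ((Submodule.span ℂ (Set.range (chr (G := G))) : Submodule ℂ C(PDual G, ℂ)) :
        Set C(PDual G, ℂ))) :=
    hrange.dense_image (ContinuousMap.toLp (E := ℂ) 2 μ ℂ).continuous hdense
  have heq : (ContinuousMap.toLp (E := ℂ) 2 μ ℂ) ''
      ((Submodule.span ℂ (Set.range (chr (G := G))) : Submodule ℂ C(PDual G, ℂ)) :
        Set C(PDual G, ℂ))
      = ((Submodule.span ℂ (Set.range (eL (G := G) μ)) : Submodule ℂ (Lp ℂ 2 μ)) :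
        Set (Lp ℂ 2 μ)) := by
    have h1 : (ContinuousMap.toLp (E := ℂ) 2 μ ℂ) ''
        ((Submodule.span ℂ (Set.range (chr (G := G))) : Submodule ℂ C(PDual G, ℂ)) :
          Set C(PDual G, ℂ))
        = (Submodule.map (ContinuousMap.toLp (E := ℂ) 2 μ ℂ : C(PDual G, ℂ) →ₗ[ℂ] Lp ℂ 2 μ)
            (Submodule.span ℂ (Set.range (chr (G := G)))) : Set (Lp ℂ 2 μ)) := rfl
    rw [h1, Submodule.map_span]
    congr 1
    rw [← Set.range_comp]
    rfl
  rw [heq] at himg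
  exact himg

theorem eq_zero_of_orthogonal (f : Lp ℂ 2 μ) (hf : ∀ g : G, ⟪eL μ g, f⟫ = 0) : f = 0 := by
  have hd := dense_span_eL (G := G) μ
  rw [Submodule.topologicalClosure_eq_top_iff] at hd
  have hmem : f ∈ (Submodule.span ℂ (Set.range (eL (G := G) μ)))ᗮ := by
    rw [Submodule.mem_orthogonal]
    intro u hu
    induction hu using Submodule.span_induction with
    | mem x hx => obtain ⟨g, rfl⟩ := hx; exact hf g
    | zero => exact inner_zero_left f
    | add x y hx hy ihx ihy => rw [inner_add_left, ihx, ihy, add_zero]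
    | smul c x hx ihx => rw [inner_smul_left, ihx, mul_zero]
  rw [hd] at hmem
  simpa using hmem

theorem eq_coeff_smul (f : Lp ℂ 2 μ) (hf : ∀ g : G, g ≠ 0 → ⟪eL μ g, f⟫ = 0) :
    f = ⟪const1 μ, f⟫ • const1 μ := by
  rw [← sub_eq_zero]
  apply eq_zero_of_orthogonal
  intro g
  classical
  rw [inner_sub_right, inner_smul_right]
  by_cases hg : g = 0
  · subst hg
    rw [← eL_zero (G := G) μ]
    have h00 : ⟪eL μ (0 : G), eL μ (0 : G)⟫ = 1 := by
      rw [inner_eL_ite]; simp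
    rw [h00, mul_one, sub_self]
  · rw [hf g hg, ← eL_zero (G := G) μ]
    have h0g : ⟪eL μ g, eL μ (0 : G)⟫ = 0 := by
      rw [inner_eL_ite]; simp [hg]
    rw [h0g, mul_zero, sub_self]

theorem coeff_vanish (Γ : AddSubgroup (AddAut G))
    (horb : ∀ g : G, g ≠ 0 → {x : G | ∃ φ ∈ Γ, φ g = x}.Infinite)
    {V : Submodule ℂ (Lp ℂ 2 μ)} (hfin : FiniteDimensional ℂ V)
    (hinv : ∀ φ ∈ Γ, ∀ f ∈ V, Lp.compMeasurePreserving (dualAct φ) (hmp φ) f ∈ V)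
    {f : Lp ℂ 2 μ} (hfV : f ∈ V) {g : G} (hg : g ≠ 0) : ⟪eL μ g, f⟫ = 0 := by
  classical
  by_contra hc
  set c : ℂ := ⟪eL μ g, f⟫ with hcdef
  have hf0 : f ≠ 0 := by
    intro h
    exact hc (by rw [hcdef, h, inner_zero_right])
  have hfpos : (0 : ℝ) < ‖f‖ := norm_pos_iff.mpr hf0
  have hcpos : (0 : ℝ) < ‖c‖ := norm_pos_iff.mpr hc
  set n := Module.finrank ℂ V with hn
  let b := stdOrthonormalBasis ℂ V
  set d : G → ℝ := fun x => ∑ i, ‖⟪eL μ x, ((b i : V) : Lp ℂ 2 μ)⟫‖ ^ 2 with hd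
  have hdnonneg : ∀ x, 0 ≤ d x := fun x =>
    Finset.sum_nonneg fun i _ => sq_nonneg _
  -- each basis vector has norm one in Lp and they are orthonormal there
  have hbnorm : ∀ i, ‖((b i : V) : Lp ℂ 2 μ)‖ = 1 := by
    intro i
    rw [← Submodule.coe_norm]
    exact b.orthonormal.1 i
  -- key pointwise estimate on the orbit
  have key : ∀ x ∈ {x : G | ∃ φ ∈ Γ, φ g = x}, ‖c‖ ^ 2 ≤ ‖f‖ ^ 2 * d x := by
    rintro x ⟨φ, hφ, rfl⟩
    set u : Lp ℂ 2 μ := Lp.compMeasurePreserving (dualAct φ) (hmp φ) f with hu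
    have huV : u ∈ V := hinv φ hφ f hfV
    have hinner : ⟪eL μ (φ g), u⟫ = c := by
      rw [← koopman_eL μ hmp φ g, hu, koopman_inner]
    have hnorm : ‖u‖ = ‖f‖ := Lp.norm_compMeasurePreserving f (hmp φ)
    set uV : V := ⟨u, huV⟩ with huVdef
    have hrepr : u = ∑ i, ⟪((b i : V) : Lp ℂ 2 μ), u⟫ • ((b i : V) : Lp ℂ 2 μ) := by
      have h1 : (∑ i, ⟪b i, uV⟫ • b i : V) = uV := b.sum_repr' uV
      have h2 : ((∑ i, ⟪b i, uV⟫ • b i : V) : Lp ℂ 2 μ)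
          = ∑ i, ⟪((b i : V) : Lp ℂ 2 μ), u⟫ • ((b i : V) : Lp ℂ 2 μ) := by
        push_cast
        refine Finset.sum_congr rfl fun i _ => ?_
        rw [Submodule.coe_inner]
      rw [← h2, h1]
    have hexp : c = ∑ i, ⟪((b i : V) : Lp ℂ 2 μ), u⟫ * ⟪eL μ (φ g), ((b i : V) : Lp ℂ 2 μ)⟫ := by
      rw [← hinner]
      conv_lhs => rw [hrepr]
      rw [inner_sum]
      refine Finset.sum_congr rfl fun i _ => ?_
      rw [inner_smul_right]
    have h5 : ‖c‖ ≤ ∑ i, ‖⟪((b i : V) : Lp ℂ 2 μ), u⟫‖ * ‖⟪eL μ (φ g), ((b i : V) : Lp ℂ 2 μ)⟫‖ := by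
      rw [hexp]
      refine (norm_sum_le _ _).trans ?_
      refine le_of_eq (Finset.sum_congr rfl fun i _ => ?_)
      rw [norm_mul]
    have h6 : ‖c‖ ^ 2 ≤ (∑ i, ‖⟪((b i : V) : Lp ℂ 2 μ), u⟫‖ ^ 2) * d (φ g) := by
      refine le_trans (pow_le_pow_left₀ (norm_nonneg c) h5 2) ?_
      exact Finset.sum_mul_sq_le_sq_mul_sq _ _ _
    have hON : Orthonormal ℂ (fun i => ((b i : V) : Lp ℂ 2 μ)) := by
      rw [orthonormal_iff_ite]
      intro i j
      have h7 := orthonormal_iff_ite.mp b.orthonormal i j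
      rwa [Submodule.coe_inner] at h7
    have h8 : (∑ i, ‖⟪((b i : V) : Lp ℂ 2 μ), u⟫‖ ^ 2) ≤ ‖f‖ ^ 2 := by
      rw [← hnorm]
      exact hON.sum_inner_products_le u
    calc ‖c‖ ^ 2 ≤ (∑ i, ‖⟪((b i : V) : Lp ℂ 2 μ), u⟫‖ ^ 2) * d (φ g) := h6
      _ ≤ ‖f‖ ^ 2 * d (φ g) := mul_le_mul_of_nonneg_right h8 (hdnonneg _)
  -- summing the estimates over a large finite subset of the orbit
  have hsum : ∀ t : Finset G, (∑ x ∈ t, d x) ≤ (n : ℝ) := by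
    intro t
    rw [hd]
    rw [Finset.sum_comm]
    have hle : ∀ i : Fin n, ∑ x ∈ t, ‖⟪eL μ x, ((b i : V) : Lp ℂ 2 μ)⟫‖ ^ 2 ≤ 1 := by
      intro i
      have h9 := (orthonormal_eL μ).sum_inner_products_le (s := t) ((b i : V) : Lp ℂ 2 μ)
      rwa [hbnorm i, one_pow] at h9
    calc ∑ i : Fin n, ∑ x ∈ t, ‖⟪eL μ x, ((b i : V) : Lp ℂ 2 μ)⟫‖ ^ 2
        ≤ ∑ _i : Fin n, (1 : ℝ) := Finset.sum_le_sum fun i _ => hle i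
      _ = (n : ℝ) := by simp
  set B : ℝ := (n : ℝ) / (‖c‖ ^ 2 / ‖f‖ ^ 2) with hB
  set N : ℕ := Nat.floor B + 1 with hN
  obtain ⟨t, hts, htcard⟩ := (horb g hg).exists_subset_card_eq N
  have hq : (0 : ℝ) < ‖c‖ ^ 2 / ‖f‖ ^ 2 := by positivity
  have hlow : ∀ x ∈ t, ‖c‖ ^ 2 / ‖f‖ ^ 2 ≤ d x := by
    intro x hx
    rw [div_le_iff₀ (by positivity)]
    rw [mul_comm]
    exact key x (hts hx)
  have hNn : (N : ℝ) * (‖c‖ ^ 2 / ‖f‖ ^ 2) ≤ (n : ℝ) := by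
    calc (N : ℝ) * (‖c‖ ^ 2 / ‖f‖ ^ 2) = ∑ _x ∈ t, (‖c‖ ^ 2 / ‖f‖ ^ 2) := by
          rw [Finset.sum_const, htcard, nsmul_eq_mul]
      _ ≤ ∑ x ∈ t, d x := Finset.sum_le_sum hlow
      _ ≤ (n : ℝ) := hsum t
  have hNB : (N : ℝ) ≤ B := by
    rw [hB, le_div_iff₀ hq]
    exact hNn
  have hBN : B < (N : ℝ) := by
    rw [hN]
    push_cast
    exact Nat.lt_floor_add_one B
  exact absurd hNB (not_le.mpr hBN)

end Characters

section MainTheorem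

open scoped InnerProductSpace

local notation "⟪" x ", " y "⟫" => @inner ℂ _ _ x y

/-- For a countable (discrete) abelian group `G` and a group
`Γ` of automorphisms of `G`, the action of `Γ` on the Pontryagin dual `Ĝ` with
Haar probability measure is weakly mixing iff the action of `Γ` on `G` has no
finite orbits other than `{0}`. -/
theorem weaklyMixing_iff_no_finite_orbits [Countable G] [BorelSpace (PDual G)]
    (Γ : AddSubgroup (AddAut G)) (μ : Measure (PDual G))
    [μ.IsAddHaarMeasure] [IsProbabilityMeasure μ]
    (hmp : ∀ φ : AddAut G, MeasurePreserving (dualAct φ) μ μ) :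
    IsWeaklyMixing μ Γ hmp ↔
      ∀ g : G, g ≠ 0 → {x : G | ∃ φ ∈ Γ, φ g = x}.Infinite := by
  classical
  constructor
  · intro hwm g hg
    by_contra hfin
    rw [Set.not_infinite] at hfin
    have hgO : g ∈ {x : G | ∃ φ ∈ Γ, φ g = x} := ⟨0, Γ.zero_mem, rfl⟩
    have hVfin : FiniteDimensional ℂ
        (Submodule.span ℂ (eL μ '' {x : G | ∃ φ ∈ Γ, φ g = x})) :=
      FiniteDimensional.span_of_finite ℂ (hfin.image _)
    have hVinv : ∀ φ ∈ Γ, ∀ f ∈ Submodule.span ℂ (eL μ '' {x : G | ∃ φ ∈ Γ, φ g = x}),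
        Lp.compMeasurePreserving (dualAct φ) (hmp φ) f ∈
          Submodule.span ℂ (eL μ '' {x : G | ∃ φ ∈ Γ, φ g = x}) := by
      intro φ hφ f hf
      induction hf using Submodule.span_induction with
      | mem x hx =>
        obtain ⟨y, hy, rfl⟩ := hx
        rw [koopman_eL μ hmp φ y]
        obtain ⟨ψ, hψ, rfl⟩ := hy
        exact Submodule.subset_span
          ⟨φ (ψ g), ⟨φ + ψ, add_mem hφ hψ, rfl⟩, rfl⟩
      | zero => simp only [map_zero]; exact Submodule.zero_mem _
      | add x y hx hy ihx ihy => rw [map_add]; exact Submodule.add_mem _ ihx ihy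
      | smul a x hx ihx => rw [koopman_smul μ hmp]; exact Submodule.smul_mem _ a ihx
    rcases hwm _ hVfin hVinv with h | h
    · have hmem : eL μ g ∈ Submodule.span ℂ (eL μ '' {x : G | ∃ φ ∈ Γ, φ g = x}) :=
        Submodule.subset_span ⟨g, hgO, rfl⟩
      rw [h, Submodule.mem_bot] at hmem
      exact eL_ne_zero μ g hmem
    · have hmem : eL μ g ∈ Submodule.span ℂ {const1 μ} := by
        rw [← h]; exact Submodule.subset_span ⟨g, hgO, rfl⟩
      rw [← eL_zero (G := G) μ, Submodule.mem_span_singleton] at hmem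
      obtain ⟨a, ha⟩ := hmem
      have h1 : ⟪eL μ (0 : G), eL μ g⟫ = 0 := by
        rw [inner_eL_ite]
        simp [Ne.symm hg]
      rw [← ha, inner_smul_right] at h1
      have h2 : ⟪eL μ (0 : G), eL μ (0 : G)⟫ = 1 := by
        rw [inner_eL_ite]; simp
      rw [h2, mul_one] at h1
      rw [h1, zero_smul] at ha
      exact eL_ne_zero μ g ha.symm
  · intro horb V hVfin hVinv
    by_cases hV : V = ⊥
    · exact Or.inl hV
    right
    have hsub : V ≤ Submodule.span ℂ {const1 μ} := by
      intro f hf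
      rw [Submodule.mem_span_singleton]
      refine ⟨⟪const1 μ, f⟫, ?_⟩
      exact (eq_coeff_smul μ f fun g hg =>
        coeff_vanish μ hmp Γ horb hVfin hVinv hf hg).symm
    obtain ⟨f, hfV, hf0⟩ := Submodule.exists_mem_ne_zero_of_ne_bot hV
    obtain ⟨a, ha⟩ := Submodule.mem_span_singleton.mp (hsub hfV)
    have ha0 : a ≠ 0 := by
      rintro rfl
      rw [zero_smul] at ha
      exact hf0 ha.symm
    have hc1 : const1 μ ∈ V := by
      have h3 : a⁻¹ • f = const1 μ := by
        rw [← ha, smul_smul, inv_mul_cancel₀ ha0, one_smul]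
      rw [← h3]
      exact Submodule.smul_mem _ _ hfV
    refine le_antisymm hsub ?_
    rw [Submodule.span_le, Set.singleton_subset_iff]
    exact hc1

end MainTheorem
end
end
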